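/- Let p be a prime. Every left brace whose additive group is isomorphic to Z/(p) × Z/(p) is isomorphic to exactly one of the following two left braces on Z/(p) × Z/(p): (i) the trivial brace (x₁,y₁)·(x₂,y₂) = (x₁+x₂, y₁+y₂); (ii) the brace with multiplication (x₁,y₁)·(x₂,y₂) = (x₁+x₂+y₁y₂, y₁+y₂). Moreover these two left braces are not isomorphic. -/

import Mathlib

open Matrix



private lemma zmod_smul_of_addhom {p : ℕ} [NeZero p] {M N : Type*} [AddCommMonoid M]
    [AddCommMonoid N] [Module (ZMod p) M] [Module (ZMod p) N] (f : M → N)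
    (hf : ∀ x y, f (x + y) = f x + f y) (h0 : f 0 = 0) (c : ZMod p) (x : M) :
    f (c • x) = c • f x := by
  have hn : ∀ (m : ℕ) (y : M), f (m • y) = m • f y := by
    intro m y
    induction m with
    | zero => simpa using h0
    | succ k ih => rw [succ_nsmul, succ_nsmul, hf, ih]
  calc f (c • x) = f ((c.val : ZMod p) • x) := by rw [ZMod.natCast_rightInverse c]
  _ = f (c.val • x) := by rw [Nat.cast_smul_eq_nsmul]
  _ = c.val • f x := hn _ _
  _ = (c.val : ZMod p) • f x := by rw [Nat.cast_smul_eq_nsmul]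
  _ = c • f x := by rw [ZMod.natCast_rightInverse c]

private lemma mat_ext2 {R : Type*} [CommRing R] {M N : Matrix (Fin 2) (Fin 2) R}
    (h : ∀ v, M *ᵥ v = N *ᵥ v) : M = N := by
  ext i j
  have := congrFun (h (Pi.single j 1)) i
  simpa [Matrix.mulVec_single] using this

private lemma smul_cancel_mat {p : ℕ} [Fact p.Prime] {N : Matrix (Fin 2) (Fin 2) (ZMod p)}
    (hN : N ≠ 0) {c d : ZMod p} (h : c • N = d • N) : c = d := by
  by_contra hcd
  apply hN
  have h2 : (c - d) • N = 0 := by rw [sub_smul, h, sub_self]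
  ext i j
  have h3 := congrFun (congrFun h2 i) j
  simp only [Matrix.smul_apply, smul_eq_mul, Matrix.zero_apply] at h3 ⊢
  rcases mul_eq_zero.1 h3 with h4 | h4
  · exact absurd (sub_eq_zero.1 h4) hcd
  · exact h4


private lemma sq_eq_zero_of_pow_eq_zero {p : ℕ} [Fact p.Prime]
    (M : Matrix (Fin 2) (Fin 2) (ZMod p)) {k : ℕ} (hk : M ^ k = 0) : M ^ 2 = 0 := by
  rcases Nat.eq_zero_or_pos k with rfl | hkpos
  · rw [pow_zero] at hk
    calc M ^ 2 = M ^ 2 * 1 := (mul_one _).symm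
    _ = 0 := by rw [hk, mul_zero]
  obtain ⟨a, b, c, d, rfl⟩ : ∃ a b c d, M = !![a, b; c, d] :=
    ⟨_, _, _, _, Matrix.eta_fin_two M⟩
  have hdet : a * d - b * c = 0 := by
    have h5 : (!![a, b; c, d]).det ^ k = 0 := by
      rw [← Matrix.det_pow, hk, Matrix.det_zero]
    rw [Matrix.det_fin_two_of] at h5
    exact pow_eq_zero_iff hkpos.ne' |>.1 h5
  have hsq : !![a, b; c, d] ^ 2 = (a + d) • !![a, b; c, d] := by
    rw [pow_two, Matrix.mul_fin_two]
    ext i j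
    fin_cases i <;> fin_cases j <;>
      simp [Matrix.smul_apply, smul_eq_mul] <;>
      first
      | ring1
      | linear_combination hdet
      | linear_combination -hdet
      | linear_combination (2 : ZMod p) * hdet
      | linear_combination -(2 : ZMod p) * hdet
  by_cases hM : !![a, b; c, d] = (0 : Matrix (Fin 2) (Fin 2) (ZMod p))
  · rw [hM, pow_two, mul_zero]
  have hpow : ∀ j : ℕ, !![a, b; c, d] ^ (j + 1) = (a + d) ^ j • !![a, b; c, d] := by
    intro j
    induction j with
    | zero => simp
    | succ m ih =>
      calc !![a, b; c, d] ^ (m + 1 + 1) = !![a, b; c, d] ^ (m + 1) * !![a, b; c, d] := by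
            rw [pow_succ]
      _ = ((a + d) ^ m • !![a, b; c, d]) * !![a, b; c, d] := by rw [ih]
      _ = (a + d) ^ m • (!![a, b; c, d] ^ 2) := by rw [smul_mul_assoc, pow_two]
      _ = (a + d) ^ (m + 1) • !![a, b; c, d] := by rw [hsq, smul_smul, pow_succ]
  have htr : a + d = 0 := by
    obtain ⟨j, hj⟩ := Nat.exists_eq_succ_of_ne_zero hkpos.ne'
    rw [hj, Nat.succ_eq_add_one, hpow] at hk
    have hne : ∃ i j', !![a, b; c, d] i j' ≠ 0 := by
      by_contra hc
      push_neg at hc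
      exact hM (by ext i j'; simpa using hc i j')
    obtain ⟨i, j', hij⟩ := hne
    have h6 := congrFun (congrFun hk i) j'
    simp only [Matrix.smul_apply, smul_eq_mul, Matrix.zero_apply] at h6
    rcases mul_eq_zero.1 h6 with h4 | h4
    · rcases Nat.eq_zero_or_pos j with rfl | hjpos
      · simp at h4
      · exact pow_eq_zero_iff hjpos.ne' |>.1 h4
    · exact absurd h4 hij
  rw [hsq, htr, zero_smul]


set_option maxHeartbeats 1000000 in
private lemma square_zero_commute_smul {p : ℕ} [Fact p.Prime]
    {N M : Matrix (Fin 2) (Fin 2) (ZMod p)} (hN : N ≠ 0) (hN2 : N ^ 2 = 0)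
    (hM2 : M ^ 2 = 0) (hc : M * N = N * M) : ∃ c : ZMod p, M = c • N := by
  obtain ⟨v, hv⟩ : ∃ v, N *ᵥ v ≠ 0 := by
    by_contra h
    push_neg at h
    exact hN (mat_ext2 fun v => by rw [h, Matrix.zero_mulVec])
  set w := N *ᵥ v with hw
  have hNw : N *ᵥ w = 0 := by
    rw [hw, Matrix.mulVec_mulVec, ← pow_two, hN2, Matrix.zero_mulVec]
  have li : LinearIndependent (ZMod p) ![v, w] := by
    rw [linearIndependent_fin2]
    constructor
    · simpa using hv
    · intro a ha
      simp only [Matrix.cons_val_one, Matrix.head_cons, Matrix.cons_val_zero] at ha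
      apply hv
      have h9 : N *ᵥ (a • w) = 0 := by rw [Matrix.mulVec_smul, hNw, smul_zero]
      rw [ha] at h9
      rw [hw]
      exact h9
  obtain ⟨b2, hb2⟩ : ∃ b2 : Module.Basis (Fin 2) (ZMod p) (Fin 2 → ZMod p), ⇑b2 = ![v, w] :=
    ⟨_, coe_basisOfLinearIndependentOfCardEqFinrank li (by simp [Module.finrank_pi])⟩
  have hdec : ∀ u, u = b2.equivFun u 0 • v + b2.equivFun u 1 • w := by
    intro u
    have h := b2.sum_equivFun u
    rw [Fin.sum_univ_two, hb2] at h
    simp only [Matrix.cons_val_zero, Matrix.cons_val_one, Matrix.head_cons] at h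
    exact h.symm
  have hcoef0 : ∀ u, N *ᵥ u = b2.equivFun u 0 • w := by
    intro u
    conv_lhs => rw [hdec u]
    rw [Matrix.mulVec_add, Matrix.mulVec_smul, Matrix.mulVec_smul, hNw, ← hw, smul_zero,
      add_zero]
  have hMw : M *ᵥ w = 0 := by
    have h1 : N *ᵥ (M *ᵥ w) = 0 := by
      rw [Matrix.mulVec_mulVec, ← hc, ← Matrix.mulVec_mulVec, hNw, Matrix.mulVec_zero]
    have h2 : b2.equivFun (M *ᵥ w) 0 = 0 := by
      rw [hcoef0] at h1
      rcases smul_eq_zero.1 h1 with h | h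
      · exact h
      · exact absurd h hv
    have h3 : M *ᵥ w = b2.equivFun (M *ᵥ w) 1 • w := by
      conv_lhs => rw [hdec (M *ᵥ w)]
      rw [h2, zero_smul, zero_add]
    set β := b2.equivFun (M *ᵥ w) 1 with hβ
    have h4 : (β * β) • w = 0 := by
      calc (β * β) • w = M *ᵥ (M *ᵥ w) := by
            rw [h3, Matrix.mulVec_smul, h3, smul_smul]
      _ = (M * M) *ᵥ w := by rw [Matrix.mulVec_mulVec]
      _ = 0 := by rw [← pow_two, hM2, Matrix.zero_mulVec]
    have h5 : β = 0 := by
      rcases smul_eq_zero.1 h4 with h | h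
      · rcases mul_eq_zero.1 h with h' | h' <;> exact h'
      · exact absurd h hv
    rw [h3, h5, zero_smul]
  have hMv : ∃ β : ZMod p, M *ᵥ v = β • w := by
    have h1 : N *ᵥ (M *ᵥ v) = 0 := by
      rw [Matrix.mulVec_mulVec, ← hc, ← Matrix.mulVec_mulVec, ← hw, hMw]
    have h2 : b2.equivFun (M *ᵥ v) 0 = 0 := by
      rw [hcoef0] at h1
      rcases smul_eq_zero.1 h1 with h | h
      · exact h
      · exact absurd h hv
    refine ⟨b2.equivFun (M *ᵥ v) 1, ?_⟩
    conv_lhs => rw [hdec (M *ᵥ v)]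
    rw [h2, zero_smul, zero_add]
  obtain ⟨β, hβ⟩ := hMv
  refine ⟨β, mat_ext2 fun u => ?_⟩
  conv_lhs => rw [hdec u]
  rw [Matrix.smul_mulVec, hcoef0 u, Matrix.mulVec_add, Matrix.mulVec_smul,
    Matrix.mulVec_smul, hβ, hMw, smul_zero, add_zero, smul_smul, smul_smul, mul_comm]


private def pairAE (p : ℕ) : (Fin 2 → ZMod p) ≃+ ZMod p × ZMod p where
  toFun f := (f 0, f 1)
  invFun x := ![x.1, x.2]
  left_inv f := by
    funext i
    fin_cases i <;> simp
  right_inv x := by simp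
  map_add' f g := rfl

set_option maxHeartbeats 1000000 in
private lemma model_case {p : ℕ} [Fact p.Prime] (n : Matrix (Fin 2) (Fin 2) (ZMod p))
    (hnne : n ≠ 0) (hn2 : n ^ 2 = 0) (τ : (Fin 2 → ZMod p) → ZMod p)
    (hτadd : ∀ u v, τ (u + v) = τ u + τ v)
    (hτn : ∀ v, τ (n *ᵥ v) = 0)
    (hτ1 : ∃ u, τ u = 1) :
    ∃ g : (Fin 2 → ZMod p) ≃+ ZMod p × ZMod p,
      ∀ u v, g (u + v + τ u • (n *ᵥ v)) =
        ((g u).1 + (g v).1 + (g u).2 * (g v).2, (g u).2 + (g v).2) := by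
  have τ0 : τ 0 = 0 := by
    have := hτadd 0 0
    rw [add_zero] at this
    exact left_eq_add.1 this
  have hτs : ∀ (c : ZMod p) u, τ (c • u) = c * τ u := by
    intro c u
    have := zmod_smul_of_addhom τ hτadd τ0 c u
    rwa [smul_eq_mul] at this
  -- find u₀ with τ u₀ = 1 and n *ᵥ u₀ ≠ 0
  obtain ⟨u₀, hτu₀, hnu₀⟩ : ∃ u₀, τ u₀ = 1 ∧ n *ᵥ u₀ ≠ 0 := by
    obtain ⟨u₁, hu₁⟩ := hτ1
    obtain ⟨v₁, hv₁⟩ : ∃ v, n *ᵥ v ≠ 0 := by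
      by_contra h
      push_neg at h
      exact hnne (mat_ext2 fun v => by rw [h, Matrix.zero_mulVec])
    by_cases hτv₁ : τ v₁ = 0
    · by_cases hnu₁ : n *ᵥ u₁ = 0
      · refine ⟨u₁ + v₁, ?_, ?_⟩
        · rw [hτadd, hu₁, hτv₁, add_zero]
        · rw [Matrix.mulVec_add, hnu₁, zero_add]
          exact hv₁
      · exact ⟨u₁, hu₁, hnu₁⟩
    · refine ⟨(τ v₁)⁻¹ • v₁, ?_, ?_⟩
      · rw [hτs, inv_mul_cancel₀ hτv₁]
      · rw [Matrix.mulVec_smul]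
        intro h
        rcases smul_eq_zero.1 h with h' | h'
        · exact hτv₁ (by simpa using congrArg (τ v₁ * ·) h')
        · exact hv₁ h'
  set w₀ := n *ᵥ u₀ with hw₀
  have hτw₀ : τ w₀ = 0 := hτn u₀
  have hnw₀ : n *ᵥ w₀ = 0 := by
    rw [hw₀, Matrix.mulVec_mulVec, ← pow_two, hn2, Matrix.zero_mulVec]
  have li : LinearIndependent (ZMod p) ![w₀, u₀] := by
    rw [linearIndependent_fin2]
    constructor
    · simp only [Matrix.cons_val_one, Matrix.head_cons, Matrix.cons_val_zero]
      intro h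
      rw [h] at hτu₀
      rw [τ0] at hτu₀
      exact one_ne_zero hτu₀.symm
    · intro a ha
      simp only [Matrix.cons_val_one, Matrix.head_cons, Matrix.cons_val_zero] at ha
      apply hnu₀
      have h1 : τ (a • u₀) = a := by rw [hτs, hτu₀, mul_one]
      rw [ha, hτw₀] at h1
      rw [← h1] at ha
      rw [zero_smul] at ha
      exact ha.symm
  obtain ⟨b2, hb2⟩ : ∃ b2 : Module.Basis (Fin 2) (ZMod p) (Fin 2 → ZMod p), ⇑b2 = ![w₀, u₀] :=
    ⟨_, coe_basisOfLinearIndependentOfCardEqFinrank li (by simp [Module.finrank_pi])⟩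
  have hdec : ∀ u, u = b2.equivFun u 0 • w₀ + b2.equivFun u 1 • u₀ := by
    intro u
    have h := b2.sum_equivFun u
    rw [Fin.sum_univ_two, hb2] at h
    simp only [Matrix.cons_val_zero, Matrix.cons_val_one, Matrix.head_cons] at h
    exact h.symm
  have hr1 : ∀ u, b2.equivFun u 1 = τ u := by
    intro u
    conv_rhs => rw [hdec u]
    rw [hτadd, hτs, hτs, hτw₀, hτu₀, mul_zero, mul_one, zero_add]
  have hnv : ∀ u, n *ᵥ u = τ u • w₀ := by
    intro u
    conv_lhs => rw [hdec u]
    rw [Matrix.mulVec_add, Matrix.mulVec_smul, Matrix.mulVec_smul, hnw₀, ← hw₀, smul_zero,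
      zero_add, hr1]
  refine ⟨(b2.equivFun.toAddEquiv).trans (pairAE p), fun u v => ?_⟩
  set g := (b2.equivFun.toAddEquiv).trans (pairAE p) with hg
  have hg2 : ∀ u, (g u).2 = τ u := fun u => hr1 u
  have hgw₀ : g w₀ = (1, 0) := by
    have h0 : w₀ = b2 0 := by rw [hb2]; rfl
    have ha : (g w₀).1 = 1 := by
      have h3 : (g w₀).1 = b2.equivFun w₀ 0 := rfl
      rw [h3, h0, b2.equivFun_self]
      simp
    have hb : (g w₀).2 = 0 := by rw [hg2, hτw₀]
    exact Prod.ext ha hb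
  have hsm : ∀ (c : ZMod p) u, g (c • u) = c • g u := by
    intro c u
    have h1 : b2.equivFun (c • u) = c • b2.equivFun u := b2.equivFun.map_smul c u
    show (pairAE p) (b2.equivFun (c • u)) = c • (pairAE p) (b2.equivFun u)
    rw [h1]
    rfl
  have key : g (u + v + τ u • (n *ᵥ v)) = g u + g v + (τ u * τ v) • ((1 : ZMod p), (0 : ZMod p)) := by
    rw [map_add, map_add, hnv v, smul_smul, hsm, hgw₀]
  rw [key]
  have h2u := hg2 u
  have h2v := hg2 v
  ext
  · simp only [Prod.fst_add, Prod.smul_fst, smul_eq_mul, mul_one, h2u, h2v]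
  · simp only [Prod.snd_add, Prod.smul_snd, smul_eq_mul, mul_zero, add_zero, h2u, h2v]


/-- A left brace: an abelian group `(B,+)` and a group `(B,·)` such that
`a·(b+c)+a = a·b+a·c` for all `a b c`. -/
class LeftBrace (B : Type*) extends AddCommGroup B, Group B where
  left_brace : ∀ a b c : B, a * (b + c) + a = a * b + a * c

section helpers

variable {B : Type*} [LeftBrace B]

private lemma LB.mul_zero (a : B) : a * (0 : B) = a := by
  have h := LeftBrace.left_brace a 0 0
  rw [add_zero] at h
  exact (add_left_cancel h).symm

private lemma LB.one_eq_zero : (1 : B) = 0 := by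
  rw [← LB.mul_zero (1 : B), one_mul]

private lemma LB.lam_add (a b c : B) : a * (b + c) - a = (a * b - a) + (a * c - a) := by
  have h := LeftBrace.left_brace a b c
  have : a * (b + c) = a * b + a * c - a := by rw [← h]; abel
  rw [this]
  abel

private lemma LB.lam_zero (a : B) : a * (0 : B) - a = 0 := by rw [LB.mul_zero, sub_self]

private lemma LB.lam_mul (a b c : B) : (a * b) * c - a * b = a * ((b * c) - b) - a := by
  have key : a * ((b * c) - b) = a * (b * c) - a * b + a := by
    have h := LB.lam_add a (b * c - b) b
    rw [sub_add_cancel] at h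
    -- h : a * (b*c) - a = (a * (b*c - b) - a) + (a * b - a)
    have h2 : a * (b * c) = a * (b * c - b) + a * b - a := by
      have := h
      rw [sub_eq_iff_eq_add] at this
      rw [this]
      abel
    rw [h2]
    abel
  rw [mul_assoc, key]
  abel

end helpers

theorem braces_of_order_p_squared_elementary (p : ℕ) (hp : p.Prime) :
    (∀ (B : Type*) [LeftBrace B], (B ≃+ ZMod p × ZMod p) →
      (∃ e : B ≃+ ZMod p × ZMod p, ∀ x y : B, e (x * y) = e x + e y) ∨
      (∃ e : B ≃+ ZMod p × ZMod p, ∀ x y : B,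
        e (x * y) = ((e x).1 + (e y).1 + (e x).2 * (e y).2, (e x).2 + (e y).2))) ∧
    ¬∃ f : (ZMod p × ZMod p) ≃+ ZMod p × ZMod p, ∀ x y : ZMod p × ZMod p,
      f (x + y) = ((f x).1 + (f y).1 + (f x).2 * (f y).2, (f x).2 + (f y).2) := by
  haveI : Fact p.Prime := ⟨hp⟩
  constructor
  · intro B _ φ
    -- the additive-to-coordinates equivalence
    let ψ : B ≃+ (Fin 2 → ZMod p) := φ.trans (pairAE p).symm
    -- the lambda maps transported to coordinates
    let L : B → (Fin 2 → ZMod p) → (Fin 2 → ZMod p) :=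
      fun b u => ψ (b * ψ.symm u - b)
    have L_def : ∀ b u, L b u = ψ (b * ψ.symm u - b) := fun _ _ => rfl
    have L_psi : ∀ b (c : B), L b (ψ c) = ψ (b * c - b) := by
      intro b c
      rw [L_def, ψ.symm_apply_apply]
    have L_add : ∀ b u v, L b (u + v) = L b u + L b v := by
      intro b u v
      rw [L_def, L_def, L_def, map_add ψ.symm, LB.lam_add, map_add]
    have L_zero : ∀ b, L b 0 = 0 := by
      intro b
      rw [L_def, map_zero ψ.symm, LB.lam_zero, map_zero]
    have L_smul : ∀ b (c : ZMod p) u, L b (c • u) = c • L b u :=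
      fun b => zmod_smul_of_addhom (L b) (L_add b) (L_zero b)
    -- matrices of the lambda maps
    let Mt : B → Matrix (Fin 2) (Fin 2) (ZMod p) :=
      fun b => Matrix.of fun i j => L b (Pi.single j 1) i
    have Mt_mulVec : ∀ b u, Mt b *ᵥ u = L b u := by
      intro b u
      have hu : u = u 0 • (Pi.single 0 1 : Fin 2 → ZMod p) + u 1 • (Pi.single 1 1 : Fin 2 → ZMod p) := by
        funext i
        fin_cases i <;> simp [Pi.single_apply]
      conv_rhs => rw [hu]
      rw [L_add, L_smul, L_smul]
      funext i
      simp only [Matrix.mulVec, dotProduct, Fin.sum_univ_two, Pi.add_apply,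
        Pi.smul_apply, smul_eq_mul]
      show Mt b i 0 * u 0 + Mt b i 1 * u 1 = _
      rw [mul_comm, mul_comm (Mt b i 1)]
      rfl
    have Mt_mul : ∀ b c : B, Mt (b * c) = Mt b * Mt c := by
      intro b c
      apply mat_ext2
      intro u
      rw [← Matrix.mulVec_mulVec, Mt_mulVec, Mt_mulVec, Mt_mulVec]
      rw [L_def c u, L_psi b, L_def]
      exact congrArg ψ (LB.lam_mul b c (ψ.symm u))
    have Mt_zero : Mt 0 = 1 := by
      apply mat_ext2
      intro u
      rw [Mt_mulVec, Matrix.one_mulVec, L_def]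
      rw [show (0 : B) * ψ.symm u - 0 = ψ.symm u by
        rw [sub_zero, ← LB.one_eq_zero, one_mul]]
      rw [ψ.apply_symm_apply]
    -- cardinality and commutativity
    have hcard : Nat.card B = p ^ 2 := by
      rw [Nat.card_congr φ.toEquiv, Nat.card_prod, Nat.card_zmod, pow_two]
    have hcomm : ∀ a b : B, a * b = b * a :=
      IsPGroup.commutative_of_card_eq_prime_sq hcard
    have hpow : ∀ a : B, a ^ p ^ 2 = 1 := by
      intro a
      rw [← hcard]
      exact pow_card_eq_one'
    have Mt_pow : ∀ (b : B) (k : ℕ), Mt (b ^ k) = Mt b ^ k := by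
      intro b k
      induction k with
      | zero => rw [pow_zero, pow_zero, LB.one_eq_zero, Mt_zero]
      | succ m ih => rw [pow_succ, pow_succ, Mt_mul, ih]
    have Mt_sq : ∀ b : B, (Mt b - 1) ^ 2 = 0 := by
      intro b
      apply sq_eq_zero_of_pow_eq_zero (k := p ^ 2)
      have h1 : Mt b ^ p ^ 2 = 1 := by
        rw [← Mt_pow, hpow, LB.one_eq_zero, Mt_zero]
      rw [sub_pow_char_pow_of_commute p 2 (Commute.one_right (Mt b)), h1, one_pow, sub_self]
    by_cases htriv : ∀ b : B, Mt b = 1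
    · left
      refine ⟨φ, fun x y => ?_⟩
      have hxy : x * y = x + y := by
        have h1 : ψ (x * y - x) = ψ y := by
          rw [← L_psi, ← Mt_mulVec, htriv, Matrix.one_mulVec]
        have h2 : x * y - x = y := ψ.injective h1
        calc x * y = x + (x * y - x) := by abel
        _ = x + y := by rw [h2]
      rw [hxy, map_add]
    · right
      push_neg at htriv
      obtain ⟨a₀, ha₀⟩ := htriv
      set n : Matrix (Fin 2) (Fin 2) (ZMod p) := Mt a₀ - 1 with hn
      have hnne : n ≠ 0 := fun h => ha₀ (by rw [← sub_eq_zero]; exact h)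
      have hn2 : n ^ 2 = 0 := Mt_sq a₀
      have hprop : ∀ b : B, ∃ c : ZMod p, Mt b - 1 = c • n := by
        intro b
        apply square_zero_commute_smul hnne hn2 (Mt_sq b)
        have hbc : Mt b * Mt a₀ = Mt a₀ * Mt b := by
          rw [← Mt_mul, ← Mt_mul, hcomm]
        calc (Mt b - 1) * n = Mt b * Mt a₀ - Mt b - Mt a₀ + 1 := by rw [hn]; noncomm_ring
        _ = Mt a₀ * Mt b - Mt b - Mt a₀ + 1 := by rw [hbc]
        _ = n * (Mt b - 1) := by rw [hn]; noncomm_ring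
      choose t ht using hprop
      have hMt : ∀ b : B, Mt b = 1 + t b • n := by
        intro b
        rw [← ht b]
        abel
      have hta₀ : t a₀ = 1 := by
        have h1 : (1 : ZMod p) • n = t a₀ • n := by
          rw [one_smul, ← ht a₀, hn]
        exact (smul_cancel_mat hnne h1).symm
      have hn2' : n * n = 0 := by rw [← pow_two]; exact hn2
      have t_mul : ∀ b c : B, t (b * c) = t b + t c := by
        intro b c
        have h := Mt_mul b c
        rw [hMt (b * c), hMt b, hMt c] at h
        have h3 : (t b • n) * (t c • n) = (t b * t c) • (n * n) := by
          rw [smul_mul_assoc, mul_smul_comm, smul_smul]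
        have h4 : (1 : Matrix (Fin 2) (Fin 2) (ZMod p)) + t (b * c) • n
            = 1 + (t b + t c) • n := by
          rw [h, add_mul, mul_add, mul_add, one_mul, one_mul, mul_one, h3, hn2', smul_zero, add_zero,
            add_smul]
          abel
        exact smul_cancel_mat hnne (add_left_cancel h4)
      -- multiplication formula in coordinates
      have mul_formula : ∀ x y : B, ψ (x * y) = ψ x + ψ y + t x • (n *ᵥ ψ y) := by
        intro x y
        have h1 : x * y = x + (x * y - x) := by abel
        rw [h1, map_add, ← L_psi x y, ← Mt_mulVec, hMt, Matrix.add_mulVec, Matrix.one_mulVec,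
          Matrix.smul_mulVec, add_assoc]
      set τ : (Fin 2 → ZMod p) → ZMod p := fun u => t (ψ.symm u) with hτ
      have hτψ : ∀ x : B, τ (ψ x) = t x := by
        intro x
        rw [hτ]
        simp only [ψ.symm_apply_apply]
      have P1 : ∀ u v, τ (u + v + τ u • (n *ᵥ v)) = τ u + τ v := by
        intro u v
        have h2 := mul_formula (ψ.symm u) (ψ.symm v)
        rw [ψ.apply_symm_apply, ψ.apply_symm_apply] at h2
        have h3 : τ (u + v + τ u • (n *ᵥ v)) = t (ψ.symm u * ψ.symm v) := by
          rw [hτ]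
          simp only
          rw [← h2, ψ.symm_apply_apply]
        rw [h3, t_mul]
      have hker : ∀ z, n *ᵥ z = 0 → ∀ u, τ (u + z) = τ u + τ z := by
        intro z hz u
        have h1 := P1 u z
        rwa [hz, smul_zero, add_zero] at h1
      have τ0 : τ 0 = 0 := by
        have h1 := hker 0 (Matrix.mulVec_zero n) 0
        rw [add_zero] at h1
        exact left_eq_add.1 h1
      have hker_nsmul : ∀ z, n *ᵥ z = 0 → ∀ (m : ℕ) u, τ (u + m • z) = τ u + m • τ z := by
        intro z hz m
        induction m with
        | zero => intro u; rw [zero_nsmul, zero_nsmul, add_zero, add_zero]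
        | succ k ih =>
          intro u
          rw [succ_nsmul, ← add_assoc, hker z hz, ih, succ_nsmul, add_assoc]
      have nsmul_zmod : ∀ (c : ZMod p) (x : ZMod p), c.val • x = c * x := by
        intro c x
        rw [← Nat.cast_smul_eq_nsmul (ZMod p), ZMod.natCast_rightInverse, smul_eq_mul]
      have starstar : ∀ u v, τ (u + v) + τ u * τ (n *ᵥ v) = τ u + τ v := by
        intro u v
        have hz : n *ᵥ (n *ᵥ v) = 0 := by
          rw [Matrix.mulVec_mulVec, hn2', Matrix.zero_mulVec]
        have h1 := P1 u v
        have h2 : τ u • (n *ᵥ v) = (τ u).val • (n *ᵥ v) := by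
          rw [← Nat.cast_smul_eq_nsmul (ZMod p), ZMod.natCast_rightInverse]
        rw [h2, hker_nsmul _ hz _ (u + v), nsmul_zmod] at h1
        exact h1
      have hτuA : τ (ψ a₀) = 1 := by rw [hτψ, hta₀]
      have sym : ∀ u v, τ u * τ (n *ᵥ v) = τ v * τ (n *ᵥ u) := by
        intro u v
        have h1 := starstar u v
        have h2 := starstar v u
        rw [add_comm v u] at h2
        linear_combination h1 - h2
      set κ : ZMod p := τ (n *ᵥ ψ a₀) with hκdef
      have hτnκ : ∀ v, τ (n *ᵥ v) = κ * τ v := by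
        intro v
        have h1 := sym (ψ a₀) v
        rw [hτuA, one_mul] at h1
        rw [h1, mul_comm, hκdef]
      have sharp : ∀ u v, τ (u + v) = τ u + τ v - κ * (τ u * τ v) := by
        intro u v
        have h1 := starstar u v
        rw [hτnκ v] at h1
        linear_combination h1
      have smul' : ∀ u v, 1 - κ * τ (u + v) = (1 - κ * τ u) * (1 - κ * τ v) := by
        intro u v
        rw [sharp]
        ring
      have spow : ∀ (m : ℕ) u, (1 - κ * τ u) ^ m = 1 - κ * τ (m • u) := by
        intro m u
        induction m with
        | zero => rw [pow_zero, zero_nsmul, τ0, mul_zero, sub_zero]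
        | succ k ih =>
          rw [pow_succ, ih, succ_nsmul, smul']
      have hpu : (p : ℕ) • (ψ a₀) = 0 := by
        funext i
        simp only [Pi.smul_apply, Pi.zero_apply, nsmul_eq_mul, ZMod.natCast_self, zero_mul]
      have hκ : κ = 0 := by
        have h1 : (1 - κ * τ (ψ a₀)) ^ p = 1 := by
          rw [spow, hpu, τ0, mul_zero, sub_zero]
        rw [ZMod.pow_card] at h1
        rw [hτuA, mul_one] at h1
        linear_combination -h1
      have τadd : ∀ u v, τ (u + v) = τ u + τ v := by
        intro u v
        rw [sharp, hκ]
        ring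
      have hτn0 : ∀ v, τ (n *ᵥ v) = 0 := by
        intro v
        rw [hτnκ, hκ, zero_mul]
      obtain ⟨g, hg⟩ := model_case n hnne hn2 τ τadd hτn0 ⟨ψ a₀, hτuA⟩
      refine ⟨ψ.trans g, fun x y => ?_⟩
      show g (ψ (x * y)) = ((g (ψ x)).1 + (g (ψ y)).1 + (g (ψ x)).2 * (g (ψ y)).2,
        (g (ψ x)).2 + (g (ψ y)).2)
      rw [mul_formula, ← hτψ x, hg]
  · rintro ⟨f, hf⟩
    have h := hf (f.symm (0, 1)) (f.symm (0, 1))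
    rw [map_add, f.apply_symm_apply] at h
    have h1 := congrArg Prod.fst h
    simp at h1
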